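/- Suppose * : M_n(R) → M_n(R) defines an R*-algebra structure and there is an invertible matrix C ∈ M_n(R) such that A* = C⁻¹ A^T C for all A. Then there exists a ∈ R with C^T = aC and a² = 1. -/

import Mathlib

open Matrix

/-- If `st` is an `R*`-algebra structure on `M_n(R)` given by `A ↦ C⁻¹ Aᵀ C` for
some invertible `C`, then there is `a ∈ R` with `Cᵀ = a • C` and `a² = 1`. -/
theorem stmt_5 (R : Type*) [CommRing R] (n : ℕ)
    (st : Matrix (Fin n) (Fin n) R → Matrix (Fin n) (Fin n) R)
    (hadd : ∀ A B, st (A + B) = st A + st B)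
    (hsmul : ∀ (r : R) A, st (r • A) = r • st A)
    (hmul : ∀ A B, st (A * B) = st B * st A)
    (hone : st 1 = 1)
    (hinv : ∀ A, st (st A) = A)
    (C : Matrix (Fin n) (Fin n) R) [Invertible C]
    (hst : ∀ A, st A = ⅟C * Aᵀ * C) :
    ∃ a : R, Cᵀ = a • C ∧ a ^ 2 = 1 := by
  rcases Nat.eq_zero_or_pos n with hn | hn
  · subst hn
    exact ⟨1, by ext i j; exact absurd i.2 (by omega), by ring⟩
  set D := ⅟C * Cᵀ with hD
  set E := (⅟C)ᵀ * C with hE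
  have h : ∀ A : Matrix (Fin n) (Fin n) R, D * A * E = A := by
    intro A
    have h := hinv A
    rw [hst, hst] at h
    calc D * A * E = ⅟C * (⅟C * Aᵀ * C)ᵀ * C := by
          simp [hD, hE, Matrix.transpose_mul, Matrix.mul_assoc]
      _ = A := h
  have hDE : D * E = 1 := by simpa using h 1
  have hED : E * D = 1 := mul_eq_one_comm.mp hDE
  have key : ∀ A : Matrix (Fin n) (Fin n) R, Commute A D := by
    intro A
    calc A * D = D * A * E * D := by rw [h]
      _ = D * A * (E * D) := by rw [Matrix.mul_assoc]
      _ = D * A := by rw [hED, Matrix.mul_one]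
  obtain ⟨a, ha⟩ := mem_range_scalar_iff_commute_single'.mpr
    (fun i j => key _)
  -- ha : scalar n a = D
  have hsc : (Matrix.scalar (Fin n)) a = a • (1 : Matrix (Fin n) (Fin n) R) := by
    ext i j; simp [Matrix.scalar_apply, Matrix.one_apply, Matrix.diagonal,
      Matrix.smul_apply]
  have hCt : Cᵀ = a • C := by
    have h5 : C * D = C * (a • 1) := by rw [← ha, hsc]
    rw [hD, ← Matrix.mul_assoc, mul_invOf_self, Matrix.one_mul] at h5
    rw [h5]; simp [Matrix.mul_smul]
  refine ⟨a, hCt, ?_⟩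
  have hC : C = (a ^ 2) • C := by
    conv_lhs => rw [← Matrix.transpose_transpose C, hCt]
    rw [Matrix.transpose_smul, hCt, smul_smul, sq]
  have h1 : (1 : Matrix (Fin n) (Fin n) R) = (a ^ 2) • 1 := by
    calc (1 : Matrix (Fin n) (Fin n) R) = ⅟C * C := (invOf_mul_self C).symm
      _ = ⅟C * ((a ^ 2) • C) := by rw [← hC]
      _ = (a ^ 2) • (⅟C * C) := by rw [Matrix.mul_smul]
      _ = (a ^ 2) • 1 := by rw [invOf_mul_self]
  have := congrFun (congrFun h1 ⟨0, hn⟩) ⟨0, hn⟩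
  simpa [Matrix.one_apply, eq_comm] using this
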